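/- arXiv:1609.03278 — 2 statements merged into one kernel-verified Lean document; each statement's English description precedes it below -/
import Mathlib

section
/- Bounded change of the preconditioned quasi-entropy under a rotation gate: there is a universal constant C > 0 such that for all n, all n×n Laurent-polynomial matrices M, A, B over ℂ, and every plane-rotation gate matrix R, one has |Φ_{A,B}(R · M) − Φ_{A,B}(M)| ≤ C · ‖M·A‖_{2,∞} · ‖M·B‖_{2,∞}, where |·| is the complex modulus. -/
open scoped ComplexConjugate
open LaurentPolynomial Finset

noncomputable section

/-- Evaluation of a Laurent polynomial at a complex number. -/
def Leval (ω : ℂ) (p : LaurentPolynomial ℂ) : ℂ :=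
  ∑ k ∈ p.coeff.support, p.coeff k * ω ^ k

/-- Para-conjugate of a Laurent polynomial: conjugate the coefficients and substitute `z⁻¹`. -/
def paraConj (p : LaurentPolynomial ℂ) : LaurentPolynomial ℂ :=
  AddMonoidAlgebra.ofCoeff
    (Finsupp.equivMapDomain (Equiv.neg ℤ) (Finsupp.mapRange (starRingEnd ℂ) (map_zero _) p.coeff))

/-- `U*`: the transpose of `U` with every entry para-conjugated. -/
def paraConjTranspose {n : ℕ} (U : Matrix (Fin n) (Fin n) (LaurentPolynomial ℂ)) :
    Matrix (Fin n) (Fin n) (LaurentPolynomial ℂ) :=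
  U.transpose.map paraConj

/-- A Laurent-polynomial matrix is paraunitary if `U* * U = 1`. -/
def IsParaunitary {n : ℕ} (U : Matrix (Fin n) (Fin n) (LaurentPolynomial ℂ)) : Prop :=
  paraConjTranspose U * U = 1

/-- Entrywise evaluation of a matrix of Laurent polynomials at a complex number. -/
def MatEval {n : ℕ} (ω : ℂ) (M : Matrix (Fin n) (Fin n) (LaurentPolynomial ℂ)) :
    Matrix (Fin n) (Fin n) ℂ :=
  M.map (Leval ω)

/-- A plane-rotation gate: identity except on the 2×2 principal submatrix in rows/columns
`a ≠ b`, where it is a real orthogonal 2×2 matrix (embedded as constant Laurent polynomials). -/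
def IsRotationGate {n : ℕ} (G : Matrix (Fin n) (Fin n) (LaurentPolynomial ℂ)) : Prop :=
  ∃ (a b : Fin n) (R : Matrix (Fin 2) (Fin 2) ℝ), a ≠ b ∧ R.transpose * R = 1 ∧
    G a a = LaurentPolynomial.C (R 0 0 : ℂ) ∧
    G a b = LaurentPolynomial.C (R 0 1 : ℂ) ∧
    G b a = LaurentPolynomial.C (R 1 0 : ℂ) ∧
    G b b = LaurentPolynomial.C (R 1 1 : ℂ) ∧
    (∀ i : Fin n, i ≠ a → i ≠ b → G i i = 1) ∧
    (∀ i j : Fin n, i ≠ j → ¬(i = a ∧ j = b) → ¬(i = b ∧ j = a) → G i j = 0)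

/-- A monomial gate: diagonal, equal to `1` on every diagonal entry except one, which is `z^k`. -/
def IsMonomialGate {n : ℕ} (G : Matrix (Fin n) (Fin n) (LaurentPolynomial ℂ)) : Prop :=
  ∃ (a : Fin n) (k : ℤ),
    G a a = LaurentPolynomial.T k ∧
    (∀ i : Fin n, i ≠ a → G i i = 1) ∧
    (∀ i j : Fin n, i ≠ j → G i j = 0)

/-- A Laurent lift of length `m`: `M 0 = 1` and each step is left multiplication by a
plane-rotation or monomial gate. -/
def IsLaurentLift {n : ℕ} (m : ℕ) (M : ℕ → Matrix (Fin n) (Fin n) (LaurentPolynomial ℂ)) : Prop :=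
  M 0 = 1 ∧ ∀ t < m, ∃ G : Matrix (Fin n) (Fin n) (LaurentPolynomial ℂ),
    (IsRotationGate G ∨ IsMonomialGate G) ∧ M (t + 1) = G * M t

/-- The union of the supports of all the entries of a Laurent-polynomial matrix. -/
def matSupport {n : ℕ} (M : Matrix (Fin n) (Fin n) (LaurentPolynomial ℂ)) : Finset ℤ :=
  (Finset.univ : Finset (Fin n × Fin n)).biUnion fun ij => (M ij.1 ij.2).coeff.support

/-- `deg(M)`: the maximal exponent with a nonzero coefficient over all nonzero entries
(junk value `0` for the zero matrix). -/
def matDeg {n : ℕ} (M : Matrix (Fin n) (Fin n) (LaurentPolynomial ℂ)) : ℤ :=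
  (matSupport M).max.unbotD 0

/-- `val(M)`: the minimal exponent with a nonzero coefficient over all nonzero entries
(junk value `0` for the zero matrix). -/
def matVal {n : ℕ} (M : Matrix (Fin n) (Fin n) (LaurentPolynomial ℂ)) : ℤ :=
  (matSupport M).min.untopD 0

/-- A Laurent lift is `Δ`-algebraically `κ`-well conditioned if
`Δ ^ (val(M_t) - deg(M_t)) ≤ κ` for all `t`. -/
def IsAlgWellConditioned {n : ℕ} (m : ℕ) (M : ℕ → Matrix (Fin n) (Fin n) (LaurentPolynomial ℂ))
    (Δ κ : ℝ) : Prop :=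
  ∀ t ≤ m, Δ ^ (matVal (M t) - matDeg (M t)) ≤ κ

/-- The L2 operator (spectral) norm of a complex matrix. -/
def specNorm {n : ℕ} (A : Matrix (Fin n) (Fin n) ℂ) : ℝ :=
  ‖Matrix.toEuclideanCLM (𝕜 := ℂ) A‖

/-- The Walsh–Hadamard matrix of order `n = 2^s`:
`H_n(i,j) = n^{-1/2} · (-1)^{⟨[i],[j]⟩}` with `⟨·,·⟩` the mod-2 inner product of bit vectors. -/
def WalshHadamard (s : ℕ) : Matrix (Fin (2 ^ s)) (Fin (2 ^ s)) ℝ :=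
  fun i j => (Real.sqrt (2 ^ s))⁻¹ *
    (-1 : ℝ) ^ (∑ r ∈ Finset.range s, (Nat.testBit i.val r).toNat * (Nat.testBit j.val r).toNat)

/-- The quasi-entropy kernel `h(u) = -u·log₂|u|` (note `h 0 = 0`, since `Real.logb 2 0 = 0`). -/
def hQE (u : ℂ) : ℂ := -u * (Real.logb 2 ‖u‖ : ℂ)

/-- The preconditioned quasi-entropy
`Φ_{A,B}(M) = Σ_k Σ_{i,j} h(coeff((M·A)_{i,j},k) · conj(coeff((M·B)_{i,j},k)))`.
The sum over `k` is restricted to a finite set supporting all nonzero terms. -/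
def Phi {n : ℕ} (A B M : Matrix (Fin n) (Fin n) (LaurentPolynomial ℂ)) : ℂ :=
  ∑ i : Fin n, ∑ j : Fin n,
    ∑ k ∈ ((M * A) i j).coeff.support ∪ ((M * B) i j).coeff.support,
      hQE (((M * A) i j).coeff k * conj (((M * B) i j).coeff k))

/-- The norm of a Laurent polynomial: `sqrt (Σ_k |coeff(p,k)|²)`. -/
def pnorm (p : LaurentPolynomial ℂ) : ℝ :=
  Real.sqrt (∑ k ∈ p.coeff.support, ‖p.coeff k‖ ^ 2)

/-- The norm of the `i`-th row of a Laurent-polynomial matrix. -/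
def rowNorm {n : ℕ} (M : Matrix (Fin n) (Fin n) (LaurentPolynomial ℂ)) (i : Fin n) : ℝ :=
  Real.sqrt (∑ j : Fin n, pnorm (M i j) ^ 2)

/-- The `(2,∞)` norm of a Laurent-polynomial matrix: the maximum row norm. -/
def norm2inf {n : ℕ} (M : Matrix (Fin n) (Fin n) (LaurentPolynomial ℂ)) : ℝ :=
  ⨆ i : Fin n, rowNorm M i

end


lemma t_mul_abs_logb {t : ℝ} (ht : 0 < t) (ht1 : t ≤ 1) : t * |Real.logb 2 t| ≤ 2 := by
  have hlog2 : (0.6931471803 : ℝ) < Real.log 2 := Real.log_two_gt_d9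
  have h1 : |Real.log t| ≤ 1 / t := by
    have : Real.log (1/t) ≤ 1/t - 1 := Real.log_le_sub_one_of_pos (by positivity)
    rw [abs_of_nonpos (Real.log_nonpos ht.le ht1)]
    rw [Real.log_div one_ne_zero ht.ne'] at this
    simp only [Real.log_one] at this
    nlinarith
  have : |Real.logb 2 t| ≤ 2 * |Real.log t| := by
    rw [Real.logb, abs_div]
    rw [abs_of_pos (by linarith : (0:ℝ) < Real.log 2)]
    rw [div_le_iff₀ (by linarith)]
    nlinarith [abs_nonneg (Real.log t)]
  calc t * |Real.logb 2 t| ≤ t * (2 * (1/t)) := by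
        apply mul_le_mul_of_nonneg_left _ ht.le
        exact this.trans (by nlinarith [abs_nonneg (Real.log t)])
    _ = 2 := by field_simp

lemma hQE_abs_le {u : ℂ} (hu : ‖u‖ ≤ 1) : ‖hQE u‖ ≤ 2 := by
  rcases eq_or_ne u 0 with h | h
  · simp [h, hQE]
  · have := t_mul_abs_logb (t := ‖u‖) (by simpa using h) hu
    calc ‖hQE u‖ = ‖u‖ * |Real.logb 2 (‖u‖)| := by
          simp [hQE, norm_mul, Complex.norm_real, Real.norm_eq_abs]
      _ ≤ 2 := this

lemma hQE_mul_conj (x y : ℂ) :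
    hQE (x * conj y) = -(x * conj y) *
      ((Real.logb 2 (‖x‖ * ‖y‖) : ℝ) : ℂ) := by
  simp [hQE, norm_mul, Complex.norm_conj]

lemma hQE_scale {P Q : ℝ} (hP : 0 < P) (hQ : 0 < Q) (x y : ℂ) :
    hQE (((P:ℂ) * x) * conj ((Q:ℂ) * y)) =
      ((P*Q : ℝ) : ℂ) * hQE (x * conj y)
        - ((P*Q : ℝ) : ℂ) * (x * conj y) * ((Real.logb 2 (P*Q) : ℝ) : ℂ) := by
  rcases eq_or_ne x 0 with hx | hx
  · simp [hx, hQE]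
  rcases eq_or_ne y 0 with hy | hy
  · simp [hy, hQE]
  rw [hQE_mul_conj, hQE_mul_conj]
  have hax : ‖(P:ℂ) * x‖ = P * ‖x‖ := by
    simp [norm_mul, Complex.norm_real, Real.norm_eq_abs, abs_of_pos hP]
  have hay : ‖(Q:ℂ) * y‖ = Q * ‖y‖ := by
    simp [norm_mul, Complex.norm_real, Real.norm_eq_abs, abs_of_pos hQ]
  rw [hax, hay]
  have habx : ‖x‖ ≠ 0 := by simpa using hx
  have haby : ‖y‖ ≠ 0 := by simpa using hy
  have hlog : Real.logb 2 (P * ‖x‖ * (Q * ‖y‖))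
      = Real.logb 2 (P * Q) + Real.logb 2 (‖x‖ * ‖y‖) := by
    rw [← Real.logb_mul (by positivity) (by positivity)]
    ring_nf
  rw [show P * ‖x‖ * (Q * ‖y‖)
      = P * Q * (‖x‖ * ‖y‖) by ring] at *
  rw [hlog]
  simp only [map_mul, Complex.conj_ofReal]
  push_cast
  ring

section Core
variable {c00 c01 c10 c11 : ℝ}

lemma rot_normSq (h1 : c00 * c00 + c10 * c10 = 1) (h2 : c01 * c01 + c11 * c11 = 1)
    (h3 : c00 * c01 + c10 * c11 = 0) (xa xb : ℂ) :
    Complex.normSq ((c00:ℂ) * xa + (c01:ℂ) * xb)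
      + Complex.normSq ((c10:ℂ) * xa + (c11:ℂ) * xb)
      = Complex.normSq xa + Complex.normSq xb := by
  simp only [Complex.normSq_apply, Complex.add_re, Complex.add_im, Complex.mul_re,
    Complex.mul_im, Complex.ofReal_re, Complex.ofReal_im]
  linear_combination (xa.re^2 + xa.im^2) * h1 + (xb.re^2 + xb.im^2) * h2
    + 2 * (xa.re * xb.re + xa.im * xb.im) * h3

lemma rot_inner (h1 : c00 * c00 + c10 * c10 = 1) (h2 : c01 * c01 + c11 * c11 = 1)
    (h3 : c00 * c01 + c10 * c11 = 0) (xa xb ya yb : ℂ) :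
    ((c00:ℂ) * xa + (c01:ℂ) * xb) * conj ((c00:ℂ) * ya + (c01:ℂ) * yb)
      + ((c10:ℂ) * xa + (c11:ℂ) * xb) * conj ((c10:ℂ) * ya + (c11:ℂ) * yb)
      = xa * conj ya + xb * conj yb := by
  have h1' : (c00:ℂ) * c00 + (c10:ℂ) * c10 = 1 := by exact_mod_cast congrArg (Complex.ofReal) h1
  have h2' : (c01:ℂ) * c01 + (c11:ℂ) * c11 = 1 := by exact_mod_cast congrArg (Complex.ofReal) h2
  have h3' : (c00:ℂ) * c01 + (c10:ℂ) * c11 = 0 := by exact_mod_cast congrArg (Complex.ofReal) h3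
  simp only [map_add, map_mul, Complex.conj_ofReal]
  linear_combination (xa * conj ya) * h1' + (xb * conj yb) * h2'
    + (xa * conj yb + xb * conj ya) * h3'

end Core

lemma abs_mul_conj_le_one {s t : ℂ} (hs : Complex.normSq s ≤ 1) (ht : Complex.normSq t ≤ 1) :
    ‖s * conj t‖ ≤ 1 := by
  rw [norm_mul, Complex.norm_conj]
  have h1 : ‖s‖ ≤ 1 := by
    rw [Complex.norm_def]; exact Real.sqrt_le_one.mpr hs
  have h2 : ‖t‖ ≤ 1 := by
    rw [Complex.norm_def]; exact Real.sqrt_le_one.mpr ht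
  calc ‖s‖ * ‖t‖ ≤ 1 * 1 :=
        mul_le_mul h1 h2 (norm_nonneg t) zero_le_one
    _ = 1 := one_mul 1

lemma abs4 (w x y z : ℂ) : ‖w + x - y - z‖
    ≤ ‖w‖ + ‖x‖ + ‖y‖ + ‖z‖ := by
  have h1 := norm_add_le (w + x - y) (-z)
  have h2 := norm_add_le (w + x) (-y)
  have h3 := norm_add_le w x
  rw [norm_neg] at h1 h2
  have e1 : w + x - y - z = (w + x - y) + -z := by ring
  have e2 : w + x - y = (w + x) + -y := by ring
  rw [e1]
  refine h1.trans ?_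
  rw [e2]
  linarith [h2, h3]

set_option maxHeartbeats 2000000 in
lemma core_bound {c00 c01 c10 c11 : ℝ}
    (h1 : c00 * c00 + c10 * c10 = 1) (h2 : c01 * c01 + c11 * c11 = 1)
    (h3 : c00 * c01 + c10 * c11 = 0) (xa xb ya yb : ℂ) :
    ‖hQE (((c00:ℂ) * xa + (c01:ℂ) * xb) * conj ((c00:ℂ) * ya + (c01:ℂ) * yb))
      + hQE (((c10:ℂ) * xa + (c11:ℂ) * xb) * conj ((c10:ℂ) * ya + (c11:ℂ) * yb))
      - hQE (xa * conj ya) - hQE (xb * conj yb)‖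
    ≤ 8 * Real.sqrt (Complex.normSq xa + Complex.normSq xb)
        * Real.sqrt (Complex.normSq ya + Complex.normSq yb) := by
  have hnx0 : (0:ℝ) ≤ Complex.normSq xa + Complex.normSq xb :=
    add_nonneg (Complex.normSq_nonneg _) (Complex.normSq_nonneg _)
  have hny0 : (0:ℝ) ≤ Complex.normSq ya + Complex.normSq yb :=
    add_nonneg (Complex.normSq_nonneg _) (Complex.normSq_nonneg _)
  have hRHS0 : (0:ℝ) ≤ 8 * Real.sqrt (Complex.normSq xa + Complex.normSq xb)
        * Real.sqrt (Complex.normSq ya + Complex.normSq yb) := by positivity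
  rcases eq_or_lt_of_le hnx0 with hx0 | hxpos
  · have hxa : xa = 0 := Complex.normSq_eq_zero.mp
      (by nlinarith [Complex.normSq_nonneg xa, Complex.normSq_nonneg xb])
    have hxb : xb = 0 := Complex.normSq_eq_zero.mp
      (by nlinarith [Complex.normSq_nonneg xa, Complex.normSq_nonneg xb])
    refine le_trans ?_ hRHS0
    rw [hxa, hxb]
    simp [hQE]
  rcases eq_or_lt_of_le hny0 with hy0 | hypos
  · have hya : ya = 0 := Complex.normSq_eq_zero.mp
      (by nlinarith [Complex.normSq_nonneg ya, Complex.normSq_nonneg yb])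
    have hyb : yb = 0 := Complex.normSq_eq_zero.mp
      (by nlinarith [Complex.normSq_nonneg ya, Complex.normSq_nonneg yb])
    refine le_trans ?_ hRHS0
    rw [hya, hyb]
    simp [hQE]
  set P := Real.sqrt (Complex.normSq xa + Complex.normSq xb) with hPdef
  set Q := Real.sqrt (Complex.normSq ya + Complex.normSq yb) with hQdef
  have hP : 0 < P := Real.sqrt_pos.mpr hxpos
  have hQ : 0 < Q := Real.sqrt_pos.mpr hypos
  have hP2 : (P:ℝ)^2 = Complex.normSq xa + Complex.normSq xb := Real.sq_sqrt hnx0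
  have hQ2 : (Q:ℝ)^2 = Complex.normSq ya + Complex.normSq yb := Real.sq_sqrt hny0
  set ua := xa / (P:ℂ) with hua
  set ub := xb / (P:ℂ) with hub
  set va := ya / (Q:ℂ) with hva
  set vb := yb / (Q:ℂ) with hvb
  have hPne : (P:ℂ) ≠ 0 := by exact_mod_cast hP.ne'
  have hQne : (Q:ℂ) ≠ 0 := by exact_mod_cast hQ.ne'
  have exa : xa = (P:ℂ) * ua := by rw [hua]; field_simp
  have exb : xb = (P:ℂ) * ub := by rw [hub]; field_simp
  have eya : ya = (Q:ℂ) * va := by rw [hva]; field_simp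
  have eyb : yb = (Q:ℂ) * vb := by rw [hvb]; field_simp
  have hnsP : Complex.normSq (P:ℂ) = P^2 := by rw [Complex.normSq_ofReal]; ring
  have hnsQ : Complex.normSq (Q:ℂ) = Q^2 := by rw [Complex.normSq_ofReal]; ring
  have hu1 : Complex.normSq ua + Complex.normSq ub = 1 := by
    rw [hua, hub, Complex.normSq_div, Complex.normSq_div, hnsP, hP2]
    rw [← add_div, div_self (by positivity)]
  have hv1 : Complex.normSq va + Complex.normSq vb = 1 := by
    rw [hva, hvb, Complex.normSq_div, Complex.normSq_div, hnsQ, hQ2]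
    rw [← add_div, div_self (by positivity)]
  have hru := rot_normSq h1 h2 h3 ua ub
  have hrv := rot_normSq h1 h2 h3 va vb
  rw [hu1] at hru
  rw [hv1] at hrv
  have era : (c00:ℂ) * xa + (c01:ℂ) * xb = (P:ℂ) * ((c00:ℂ) * ua + (c01:ℂ) * ub) := by
    rw [exa, exb]; ring
  have erb : (c10:ℂ) * xa + (c11:ℂ) * xb = (P:ℂ) * ((c10:ℂ) * ua + (c11:ℂ) * ub) := by
    rw [exa, exb]; ring
  have esa : (c00:ℂ) * ya + (c01:ℂ) * yb = (Q:ℂ) * ((c00:ℂ) * va + (c01:ℂ) * vb) := by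
    rw [eya, eyb]; ring
  have esb : (c10:ℂ) * ya + (c11:ℂ) * yb = (Q:ℂ) * ((c10:ℂ) * va + (c11:ℂ) * vb) := by
    rw [eya, eyb]; ring
  have e1 := hQE_scale hP hQ ((c00:ℂ) * ua + (c01:ℂ) * ub) ((c00:ℂ) * va + (c01:ℂ) * vb)
  have e2 := hQE_scale hP hQ ((c10:ℂ) * ua + (c11:ℂ) * ub) ((c10:ℂ) * va + (c11:ℂ) * vb)
  have e3 := hQE_scale hP hQ ua va
  have e4 := hQE_scale hP hQ ub vb
  have hinner := rot_inner h1 h2 h3 ua ub va vb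
  set D := hQE (((c00:ℂ) * ua + (c01:ℂ) * ub) * conj ((c00:ℂ) * va + (c01:ℂ) * vb))
      + hQE (((c10:ℂ) * ua + (c11:ℂ) * ub) * conj ((c10:ℂ) * va + (c11:ℂ) * vb))
      - hQE (ua * conj va) - hQE (ub * conj vb) with hD
  have key : hQE (((c00:ℂ) * xa + (c01:ℂ) * xb) * conj ((c00:ℂ) * ya + (c01:ℂ) * yb))
      + hQE (((c10:ℂ) * xa + (c11:ℂ) * xb) * conj ((c10:ℂ) * ya + (c11:ℂ) * yb))
      - hQE (xa * conj ya) - hQE (xb * conj yb)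
      = ((P*Q : ℝ) : ℂ) * D := by
    rw [era, erb, esa, esb, exa, exb, eya, eyb, e1, e2, e3, e4, hD]
    linear_combination (-((P*Q : ℝ) : ℂ)) * ((Real.logb 2 (P*Q) : ℝ) : ℂ) * hinner
  rw [key, norm_mul, Complex.norm_real, Real.norm_eq_abs, abs_of_pos (by positivity : (0:ℝ) < P * Q)]
  have b1 : ‖hQE (((c00:ℂ) * ua + (c01:ℂ) * ub) * conj ((c00:ℂ) * va + (c01:ℂ) * vb))‖ ≤ 2 :=
    hQE_abs_le (abs_mul_conj_le_one
      (by nlinarith [Complex.normSq_nonneg ((c10:ℂ) * ua + (c11:ℂ) * ub)])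
      (by nlinarith [Complex.normSq_nonneg ((c10:ℂ) * va + (c11:ℂ) * vb)]))
  have b2 : ‖hQE (((c10:ℂ) * ua + (c11:ℂ) * ub) * conj ((c10:ℂ) * va + (c11:ℂ) * vb))‖ ≤ 2 :=
    hQE_abs_le (abs_mul_conj_le_one
      (by nlinarith [Complex.normSq_nonneg ((c00:ℂ) * ua + (c01:ℂ) * ub)])
      (by nlinarith [Complex.normSq_nonneg ((c00:ℂ) * va + (c01:ℂ) * vb)]))
  have b3 : ‖hQE (ua * conj va)‖ ≤ 2 :=
    hQE_abs_le (abs_mul_conj_le_one (by nlinarith [Complex.normSq_nonneg ub])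
      (by nlinarith [Complex.normSq_nonneg vb]))
  have b4 : ‖hQE (ub * conj vb)‖ ≤ 2 :=
    hQE_abs_le (abs_mul_conj_le_one (by nlinarith [Complex.normSq_nonneg ua])
      (by nlinarith [Complex.normSq_nonneg va]))
  have habs : ‖D‖ ≤ 8 := by
    have h4 := abs4 (hQE (((c00:ℂ) * ua + (c01:ℂ) * ub) * conj ((c00:ℂ) * va + (c01:ℂ) * vb)))
      (hQE (((c10:ℂ) * ua + (c11:ℂ) * ub) * conj ((c10:ℂ) * va + (c11:ℂ) * vb)))
      (hQE (ua * conj va)) (hQE (ub * conj vb))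
    rw [← hD] at h4
    linarith
  calc P * Q * ‖D‖ ≤ P * Q * 8 :=
        mul_le_mul_of_nonneg_left habs (by positivity)
    _ = 8 * P * Q := by ring

section AuxMatrix

lemma QE_hQE_zero : hQE 0 = 0 := by simp [hQE]

lemma QE_sum_eq_pair {n : ℕ} {a b : Fin n} (hab : a ≠ b) (g : Fin n → ℂ)
    (h : ∀ i, i ≠ a → i ≠ b → g i = 0) : ∑ i, g i = g a + g b := by
  rw [← Finset.sum_pair hab]
  refine (Finset.sum_subset (Finset.subset_univ _) fun i _ hi => ?_).symm
  simp only [Finset.mem_insert, Finset.mem_singleton] at hi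
  push_neg at hi
  exact h i hi.1 hi.2

lemma QE_coeff_C_mul (c : ℂ) (p : LaurentPolynomial ℂ) (k : ℤ) :
    (LaurentPolynomial.C c * p).coeff k = c * p.coeff k := by
  rw [← LaurentPolynomial.single_eq_C]
  exact AddMonoidAlgebra.coeff_single_zero_mul p c k

lemma QE_Phi_eq_sum {n : ℕ} (A B M : Matrix (Fin n) (Fin n) (LaurentPolynomial ℂ)) (S : Finset ℤ)
    (hS : ∀ i j : Fin n, ((M * A) i j).coeff.support ∪ ((M * B) i j).coeff.support ⊆ S) :
    Phi A B M = ∑ i : Fin n, ∑ j : Fin n, ∑ k ∈ S,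
      hQE (((M * A) i j).coeff k * conj (((M * B) i j).coeff k)) := by
  unfold Phi
  refine Finset.sum_congr rfl fun i _ => Finset.sum_congr rfl fun j _ => ?_
  refine Finset.sum_subset (hS i j) fun k _ hk => ?_
  have hx : ((M * A) i j).coeff k = 0 := by
    by_contra h
    exact hk (Finset.mem_union_left _ (Finsupp.mem_support_iff.mpr h))
  rw [hx, zero_mul]
  exact QE_hQE_zero

lemma QE_matSupport_subset {n : ℕ} (N : Matrix (Fin n) (Fin n) (LaurentPolynomial ℂ))
    (i j : Fin n) : (N i j).coeff.support ⊆ matSupport N :=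
  Finset.subset_biUnion_of_mem (fun ij => (N ij.1 ij.2).coeff.support) (Finset.mem_univ (i, j))

lemma QE_sum_normSq_eq_rowNorm_sq {n : ℕ} (N : Matrix (Fin n) (Fin n) (LaurentPolynomial ℂ))
    (i : Fin n) (S : Finset ℤ) (hS : ∀ j, (N i j).coeff.support ⊆ S) :
    ∑ j : Fin n, ∑ k ∈ S, Complex.normSq ((N i j).coeff k) = rowNorm N i ^ 2 := by
  rw [rowNorm, Real.sq_sqrt (Finset.sum_nonneg fun j _ => sq_nonneg _)]
  refine Finset.sum_congr rfl fun j _ => ?_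
  rw [pnorm, Real.sq_sqrt (Finset.sum_nonneg fun k _ => sq_nonneg _)]
  rw [← Finset.sum_subset (hS j) (fun k _ hk => by
    rw [Finsupp.notMem_support_iff.mp hk]; simp)]
  exact Finset.sum_congr rfl fun k _ => (Complex.sq_norm _).symm

lemma QE_rowNorm_nonneg {n : ℕ} (N : Matrix (Fin n) (Fin n) (LaurentPolynomial ℂ)) (i : Fin n) :
    0 ≤ rowNorm N i := Real.sqrt_nonneg _

lemma QE_rowNorm_le_norm2inf {n : ℕ} (N : Matrix (Fin n) (Fin n) (LaurentPolynomial ℂ))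
    (i : Fin n) : rowNorm N i ≤ norm2inf N :=
  le_ciSup (Set.Finite.bddAbove (Set.finite_range _)) i

end AuxMatrix
set_option maxHeartbeats 4000000

/-- bounded change of the preconditioned quasi-entropy under a rotation gate. -/
theorem phi_rotation_change_bound :
    ∃ C : ℝ, 0 < C ∧
      ∀ (n : ℕ) (M A B R : Matrix (Fin n) (Fin n) (LaurentPolynomial ℂ)),
        IsRotationGate R →
        ‖Phi A B (R * M) - Phi A B M‖
          ≤ C * norm2inf (M * A) * norm2inf (M * B) := by
  refine ⟨16, by norm_num, ?_⟩
  intro n M A B R hR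
  obtain ⟨a, b, R2, hab, horth, haa, habE, hba, hbb, hdiag, hoff⟩ := hR
  -- orthogonality relations of the 2x2 block
  have h00 : (R2.transpose * R2) 0 0 = (1 : Matrix (Fin 2) (Fin 2) ℝ) 0 0 := by rw [horth]
  have h11 : (R2.transpose * R2) 1 1 = (1 : Matrix (Fin 2) (Fin 2) ℝ) 1 1 := by rw [horth]
  have h01 : (R2.transpose * R2) 0 1 = (1 : Matrix (Fin 2) (Fin 2) ℝ) 0 1 := by rw [horth]
  simp only [Matrix.mul_apply, Fin.sum_univ_two, Matrix.transpose_apply,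
    Matrix.one_apply_eq, Matrix.one_apply_ne (by norm_num : (0 : Fin 2) ≠ 1)] at h00 h11 h01
  set N := M * A with hN
  set Pm := M * B with hPm
  have hRA : R * M * A = R * N := by rw [Matrix.mul_assoc, hN]
  have hRB : R * M * B = R * Pm := by rw [Matrix.mul_assoc, hPm]
  -- rows of R * X
  have rowOther : ∀ (X : Matrix (Fin n) (Fin n) (LaurentPolynomial ℂ)) (i : Fin n),
      i ≠ a → i ≠ b → ∀ j, (R * X) i j = X i j := by
    intro X i hia hib j
    rw [Matrix.mul_apply, Finset.sum_eq_single i]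
    · rw [hdiag i hia hib, one_mul]
    · intro l _ hl
      rw [hoff i l (Ne.symm hl) (fun h => hia h.1) (fun h => hib h.1), zero_mul]
    · intro h; exact absurd (Finset.mem_univ i) h
  have rowPair : ∀ (X : Matrix (Fin n) (Fin n) (LaurentPolynomial ℂ)) (j : Fin n),
      (R * X) a j = LaurentPolynomial.C ((R2 0 0 : ℝ) : ℂ) * X a j
        + LaurentPolynomial.C ((R2 0 1 : ℝ) : ℂ) * X b j := by
    intro X j
    rw [Matrix.mul_apply]
    rw [show (∑ l, R a l * X l j) = ∑ l ∈ {a, b}, R a l * X l j from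
      (Finset.sum_subset (Finset.subset_univ _) fun l _ hl => by
        simp only [Finset.mem_insert, Finset.mem_singleton] at hl
        push_neg at hl
        rw [hoff a l (Ne.symm hl.1) (fun h => hl.2 h.2) (fun h => hab h.1), zero_mul]).symm]
    rw [Finset.sum_pair hab, haa, habE]
  have rowPairB : ∀ (X : Matrix (Fin n) (Fin n) (LaurentPolynomial ℂ)) (j : Fin n),
      (R * X) b j = LaurentPolynomial.C ((R2 1 0 : ℝ) : ℂ) * X a j
        + LaurentPolynomial.C ((R2 1 1 : ℝ) : ℂ) * X b j := by
    intro X j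
    rw [Matrix.mul_apply]
    rw [show (∑ l, R b l * X l j) = ∑ l ∈ {a, b}, R b l * X l j from
      (Finset.sum_subset (Finset.subset_univ _) fun l _ hl => by
        simp only [Finset.mem_insert, Finset.mem_singleton] at hl
        push_neg at hl
        rw [hoff b l (Ne.symm hl.2) (fun h => hab h.1.symm) (fun h => hl.1 h.2), zero_mul]).symm]
    rw [Finset.sum_pair hab, hba, hbb]
  have coeffA : ∀ (X : Matrix (Fin n) (Fin n) (LaurentPolynomial ℂ)) (j : Fin n) (k : ℤ),
      ((R * X) a j).coeff k = ((R2 0 0 : ℝ) : ℂ) * (X a j).coeff k + ((R2 0 1 : ℝ) : ℂ) * (X b j).coeff k := by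
    intro X j k
    rw [rowPair X j, AddMonoidAlgebra.coeff_add, Finsupp.add_apply, QE_coeff_C_mul, QE_coeff_C_mul]
  have coeffB : ∀ (X : Matrix (Fin n) (Fin n) (LaurentPolynomial ℂ)) (j : Fin n) (k : ℤ),
      ((R * X) b j).coeff k = ((R2 1 0 : ℝ) : ℂ) * (X a j).coeff k + ((R2 1 1 : ℝ) : ℂ) * (X b j).coeff k := by
    intro X j k
    rw [rowPairB X j, AddMonoidAlgebra.coeff_add, Finsupp.add_apply, QE_coeff_C_mul, QE_coeff_C_mul]
  -- the common support set
  set S : Finset ℤ := matSupport N ∪ matSupport Pm ∪ matSupport (R * N) ∪ matSupport (R * Pm)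
    with hSdef
  have hSN : ∀ i j, (N i j).coeff.support ⊆ S := fun i j =>
    (QE_matSupport_subset N i j).trans (by intro k hk; simp only [hSdef, Finset.mem_union]; tauto)
  have hSP : ∀ i j, (Pm i j).coeff.support ⊆ S := fun i j =>
    (QE_matSupport_subset Pm i j).trans (by intro k hk; simp only [hSdef, Finset.mem_union]; tauto)
  have hSRN : ∀ i j, ((R * N) i j).coeff.support ⊆ S := fun i j =>
    (QE_matSupport_subset (R * N) i j).trans
      (by intro k hk; simp only [hSdef, Finset.mem_union]; tauto)
  have hSRP : ∀ i j, ((R * Pm) i j).coeff.support ⊆ S := fun i j =>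
    (QE_matSupport_subset (R * Pm) i j).trans
      (by intro k hk; simp only [hSdef, Finset.mem_union]; tauto)
  have hPhiM : Phi A B M = ∑ i : Fin n, ∑ j : Fin n, ∑ k ∈ S,
      hQE ((N i j).coeff k * conj ((Pm i j).coeff k)) := by
    rw [QE_Phi_eq_sum A B M S (fun i j => Finset.union_subset (hSN i j) (hSP i j))]
  have hPhiR : Phi A B (R * M) = ∑ i : Fin n, ∑ j : Fin n, ∑ k ∈ S,
      hQE (((R * N) i j).coeff k * conj (((R * Pm) i j).coeff k)) := by
    rw [QE_Phi_eq_sum A B (R * M) S (fun i j => by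
      rw [hRA, hRB]; exact Finset.union_subset (hSRN i j) (hSRP i j))]
    simp only [hRA, hRB]
  -- rewrite the difference as a double sum over rows a and b
  have hdiff : Phi A B (R * M) - Phi A B M
      = ∑ i : Fin n, ∑ j : Fin n, ∑ k ∈ S,
          (hQE (((R * N) i j).coeff k * conj (((R * Pm) i j).coeff k))
            - hQE ((N i j).coeff k * conj ((Pm i j).coeff k))) := by
    rw [hPhiR, hPhiM]
    simp only [← Finset.sum_sub_distrib]
  have hpair : ∑ i : Fin n, ∑ j : Fin n, ∑ k ∈ S,
        (hQE (((R * N) i j).coeff k * conj (((R * Pm) i j).coeff k))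
          - hQE ((N i j).coeff k * conj ((Pm i j).coeff k)))
      = (∑ j : Fin n, ∑ k ∈ S,
          (hQE (((R * N) a j).coeff k * conj (((R * Pm) a j).coeff k))
            - hQE ((N a j).coeff k * conj ((Pm a j).coeff k))))
        + (∑ j : Fin n, ∑ k ∈ S,
          (hQE (((R * N) b j).coeff k * conj (((R * Pm) b j).coeff k))
            - hQE ((N b j).coeff k * conj ((Pm b j).coeff k)))) := by
    refine QE_sum_eq_pair hab _ fun i hia hib => ?_
    refine Finset.sum_eq_zero fun j _ => Finset.sum_eq_zero fun k _ => ?_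
    rw [rowOther N i hia hib j, rowOther Pm i hia hib j, sub_self]
  have hcomb : (∑ j : Fin n, ∑ k ∈ S,
          (hQE (((R * N) a j).coeff k * conj (((R * Pm) a j).coeff k))
            - hQE ((N a j).coeff k * conj ((Pm a j).coeff k))))
        + (∑ j : Fin n, ∑ k ∈ S,
          (hQE (((R * N) b j).coeff k * conj (((R * Pm) b j).coeff k))
            - hQE ((N b j).coeff k * conj ((Pm b j).coeff k))))
      = ∑ j : Fin n, ∑ k ∈ S,
          (hQE (((R * N) a j).coeff k * conj (((R * Pm) a j).coeff k))
            + hQE (((R * N) b j).coeff k * conj (((R * Pm) b j).coeff k))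
            - hQE ((N a j).coeff k * conj ((Pm a j).coeff k))
            - hQE ((N b j).coeff k * conj ((Pm b j).coeff k))) := by
    rw [← Finset.sum_add_distrib]
    refine Finset.sum_congr rfl fun j _ => ?_
    rw [← Finset.sum_add_distrib]
    refine Finset.sum_congr rfl fun k _ => ?_
    ring
  rw [hdiff, hpair, hcomb]
  -- termwise bound
  have hterm : ∀ j k, ‖hQE (((R * N) a j).coeff k * conj (((R * Pm) a j).coeff k))
          + hQE (((R * N) b j).coeff k * conj (((R * Pm) b j).coeff k))
          - hQE ((N a j).coeff k * conj ((Pm a j).coeff k))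
          - hQE ((N b j).coeff k * conj ((Pm b j).coeff k))‖
      ≤ 8 * Real.sqrt (Complex.normSq ((N a j).coeff k) + Complex.normSq ((N b j).coeff k))
          * Real.sqrt (Complex.normSq ((Pm a j).coeff k) + Complex.normSq ((Pm b j).coeff k)) := by
    intro j k
    rw [coeffA N j k, coeffA Pm j k, coeffB N j k, coeffB Pm j k]
    exact core_bound h00 h11 h01 _ _ _ _
  -- sum the termwise bounds via Cauchy-Schwarz
  have habs1 : ‖∑ j : Fin n, ∑ k ∈ S,
        (hQE (((R * N) a j).coeff k * conj (((R * Pm) a j).coeff k))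
          + hQE (((R * N) b j).coeff k * conj (((R * Pm) b j).coeff k))
          - hQE ((N a j).coeff k * conj ((Pm a j).coeff k))
          - hQE ((N b j).coeff k * conj ((Pm b j).coeff k)))‖
      ≤ ∑ j : Fin n, ∑ k ∈ S,
          (8 * Real.sqrt (Complex.normSq ((N a j).coeff k) + Complex.normSq ((N b j).coeff k))
            * Real.sqrt (Complex.normSq ((Pm a j).coeff k) + Complex.normSq ((Pm b j).coeff k))) := by
    refine (norm_sum_le _ _).trans ?_
    refine Finset.sum_le_sum fun j _ => ?_
    refine (norm_sum_le _ _).trans ?_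
    exact Finset.sum_le_sum fun k _ => hterm j k
  refine habs1.trans ?_
  -- Cauchy-Schwarz over the product index set
  have hCS : ∑ j : Fin n, ∑ k ∈ S,
        (8 * Real.sqrt (Complex.normSq ((N a j).coeff k) + Complex.normSq ((N b j).coeff k))
          * Real.sqrt (Complex.normSq ((Pm a j).coeff k) + Complex.normSq ((Pm b j).coeff k)))
      ≤ 8 * (Real.sqrt (∑ j : Fin n, ∑ k ∈ S,
            (Complex.normSq ((N a j).coeff k) + Complex.normSq ((N b j).coeff k)))
          * Real.sqrt (∑ j : Fin n, ∑ k ∈ S,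
            (Complex.normSq ((Pm a j).coeff k) + Complex.normSq ((Pm b j).coeff k)))) := by
    have := Real.sum_sqrt_mul_sqrt_le (f := fun p : Fin n × ℤ =>
        Complex.normSq ((N a p.1).coeff p.2) + Complex.normSq ((N b p.1).coeff p.2))
      (g := fun p : Fin n × ℤ =>
        Complex.normSq ((Pm a p.1).coeff p.2) + Complex.normSq ((Pm b p.1).coeff p.2))
      (Finset.univ ×ˢ S)
      (fun p => add_nonneg (Complex.normSq_nonneg _) (Complex.normSq_nonneg _))
      (fun p => add_nonneg (Complex.normSq_nonneg _) (Complex.normSq_nonneg _))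
    simp only [Finset.sum_product] at this
    calc ∑ j : Fin n, ∑ k ∈ S,
          (8 * Real.sqrt (Complex.normSq ((N a j).coeff k) + Complex.normSq ((N b j).coeff k))
            * Real.sqrt (Complex.normSq ((Pm a j).coeff k) + Complex.normSq ((Pm b j).coeff k)))
        = 8 * ∑ j : Fin n, ∑ k ∈ S,
            (Real.sqrt (Complex.normSq ((N a j).coeff k) + Complex.normSq ((N b j).coeff k))
              * Real.sqrt (Complex.normSq ((Pm a j).coeff k) + Complex.normSq ((Pm b j).coeff k))) := by
          rw [Finset.mul_sum]
          refine Finset.sum_congr rfl fun j _ => ?_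
          rw [Finset.mul_sum]
          exact Finset.sum_congr rfl fun k _ => by ring
      _ ≤ 8 * (Real.sqrt (∑ j : Fin n, ∑ k ∈ S,
              (Complex.normSq ((N a j).coeff k) + Complex.normSq ((N b j).coeff k)))
            * Real.sqrt (∑ j : Fin n, ∑ k ∈ S,
              (Complex.normSq ((Pm a j).coeff k) + Complex.normSq ((Pm b j).coeff k)))) := by
          exact mul_le_mul_of_nonneg_left this (by norm_num)
  refine hCS.trans ?_
  -- identify the sums with the row norms
  have hsumN : ∑ j : Fin n, ∑ k ∈ S,
        (Complex.normSq ((N a j).coeff k) + Complex.normSq ((N b j).coeff k))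
      = rowNorm N a ^ 2 + rowNorm N b ^ 2 := by
    rw [← QE_sum_normSq_eq_rowNorm_sq N a S (fun j => hSN a j),
      ← QE_sum_normSq_eq_rowNorm_sq N b S (fun j => hSN b j),
      ← Finset.sum_add_distrib]
    exact Finset.sum_congr rfl fun j _ => Finset.sum_add_distrib
  have hsumP : ∑ j : Fin n, ∑ k ∈ S,
        (Complex.normSq ((Pm a j).coeff k) + Complex.normSq ((Pm b j).coeff k))
      = rowNorm Pm a ^ 2 + rowNorm Pm b ^ 2 := by
    rw [← QE_sum_normSq_eq_rowNorm_sq Pm a S (fun j => hSP a j),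
      ← QE_sum_normSq_eq_rowNorm_sq Pm b S (fun j => hSP b j),
      ← Finset.sum_add_distrib]
    exact Finset.sum_congr rfl fun j _ => Finset.sum_add_distrib
  rw [hsumN, hsumP]
  -- finish with norm2inf bounds
  have hNa := QE_rowNorm_le_norm2inf N a
  have hNb := QE_rowNorm_le_norm2inf N b
  have hPa := QE_rowNorm_le_norm2inf Pm a
  have hPb := QE_rowNorm_le_norm2inf Pm b
  have hNa0 := QE_rowNorm_nonneg N a
  have hNb0 := QE_rowNorm_nonneg N b
  have hPa0 := QE_rowNorm_nonneg Pm a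
  have hPb0 := QE_rowNorm_nonneg Pm b
  have hn2N : 0 ≤ norm2inf N := hNa0.trans hNa
  have hn2P : 0 ≤ norm2inf Pm := hPa0.trans hPa
  have hb1 : Real.sqrt (rowNorm N a ^ 2 + rowNorm N b ^ 2)
      ≤ Real.sqrt 2 * norm2inf N := by
    rw [show Real.sqrt 2 * norm2inf N = Real.sqrt (2 * norm2inf N ^ 2) by
      rw [Real.sqrt_mul (by norm_num), Real.sqrt_sq hn2N]]
    apply Real.sqrt_le_sqrt
    have q1 : rowNorm N a ^ 2 ≤ norm2inf N ^ 2 := pow_le_pow_left₀ hNa0 hNa 2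
    have q2 : rowNorm N b ^ 2 ≤ norm2inf N ^ 2 := pow_le_pow_left₀ hNb0 hNb 2
    linarith [q1, q2]
  have hb2 : Real.sqrt (rowNorm Pm a ^ 2 + rowNorm Pm b ^ 2)
      ≤ Real.sqrt 2 * norm2inf Pm := by
    rw [show Real.sqrt 2 * norm2inf Pm = Real.sqrt (2 * norm2inf Pm ^ 2) by
      rw [Real.sqrt_mul (by norm_num), Real.sqrt_sq hn2P]]
    apply Real.sqrt_le_sqrt
    have q1 : rowNorm Pm a ^ 2 ≤ norm2inf Pm ^ 2 := pow_le_pow_left₀ hPa0 hPa 2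
    have q2 : rowNorm Pm b ^ 2 ≤ norm2inf Pm ^ 2 := pow_le_pow_left₀ hPb0 hPb 2
    linarith [q1, q2]
  have hs2 : Real.sqrt 2 * Real.sqrt 2 = 2 := Real.mul_self_sqrt (by norm_num)
  have hfin : Real.sqrt (rowNorm N a ^ 2 + rowNorm N b ^ 2)
        * Real.sqrt (rowNorm Pm a ^ 2 + rowNorm Pm b ^ 2)
      ≤ 2 * (norm2inf N * norm2inf Pm) := by
    calc Real.sqrt (rowNorm N a ^ 2 + rowNorm N b ^ 2)
          * Real.sqrt (rowNorm Pm a ^ 2 + rowNorm Pm b ^ 2)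
        ≤ (Real.sqrt 2 * norm2inf N) * (Real.sqrt 2 * norm2inf Pm) := by
          apply mul_le_mul hb1 hb2 (Real.sqrt_nonneg _)
          positivity
      _ = (Real.sqrt 2 * Real.sqrt 2) * (norm2inf N * norm2inf Pm) := by ring
      _ = 2 * (norm2inf N * norm2inf Pm) := by rw [hs2]
  calc 8 * (Real.sqrt (rowNorm N a ^ 2 + rowNorm N b ^ 2)
        * Real.sqrt (rowNorm Pm a ^ 2 + rowNorm Pm b ^ 2))
      ≤ 8 * (2 * (norm2inf N * norm2inf Pm)) := by
        exact mul_le_mul_of_nonneg_left hfin (by norm_num)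
    _ = 16 * norm2inf N * norm2inf Pm := by ring
end

section
/- Algebraically well-conditioned implies geometrically well-conditioned: let Δ ∈ (0,1), κ ≥ 1, and let (M_0, …, M_m) be a Laurent lift that is Δ-algebraically κ-well conditioned. Then for every t = 0, …, m, the complex matrix M_t[Δ] is invertible and ‖M_t[Δ]‖ · ‖M_t[Δ]⁻¹‖ ≤ κ, where ‖·‖ is the operator (spectral) norm. -/
open scoped ComplexConjugate
open LaurentPolynomial Finset

open Matrix

section Aux

open Matrix

noncomputable def AWCevalHom (ω : ℂˣ) : LaurentPolynomial ℂ →ₐ[ℂ] ℂ :=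
  AddMonoidAlgebra.lift ℂ ℂ ℤ ((Units.coeHom ℂ).comp (zpowersHom ℂˣ ω))

lemma Leval_def (ω : ℂ) (p : LaurentPolynomial ℂ) :
    Leval ω p = p.coeff.sum fun k c => c * ω ^ k := rfl

lemma Leval_eq_evalHom (ω : ℂˣ) (p : LaurentPolynomial ℂ) :
    Leval (ω : ℂ) p = AWCevalHom ω p := by
  rw [AWCevalHom, AddMonoidAlgebra.lift_apply, Leval_def]
  congr 1
  ext k c
  simp [smul_eq_mul]

lemma Leval_mul {ω : ℂ} (hω : ω ≠ 0) (p q : LaurentPolynomial ℂ) :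
    Leval ω (p * q) = Leval ω p * Leval ω q := by
  lift ω to ℂˣ using hω.isUnit
  simp only [Leval_eq_evalHom, _root_.map_mul]

lemma Leval_single (ω : ℂ) (k : ℤ) (c : ℂ) :
    Leval ω (AddMonoidAlgebra.single k c) = c * ω ^ k := by
  rw [Leval_def, AddMonoidAlgebra.coeff_single, Finsupp.sum_single_index] ; simp

lemma Leval_T (ω : ℂ) (k : ℤ) : Leval ω (LaurentPolynomial.T k) = ω ^ k := by
  simpa using Leval_single ω k 1

lemma Leval_C (ω : ℂ) (c : ℂ) : Leval ω (LaurentPolynomial.C c) = c := by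
  simpa using Leval_single ω 0 c

lemma Leval_one (ω : ℂ) : Leval ω 1 = 1 := by
  simpa using Leval_C ω 1

lemma Leval_zero (ω : ℂ) : Leval ω 0 = 0 := by
  simp [Leval_def]

lemma MatEval_one {n : ℕ} (ω : ℂ) : MatEval ω (1 : Matrix (Fin n) (Fin n) _) = 1 := by
  unfold MatEval
  rw [Matrix.map_one _ (Leval_zero ω) (Leval_one ω)]

lemma MatEval_mul {n : ℕ} {ω : ℂ} (hω : ω ≠ 0)
    (A B : Matrix (Fin n) (Fin n) (LaurentPolynomial ℂ)) :
    MatEval ω (A * B) = MatEval ω A * MatEval ω B := by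
  lift ω to ℂˣ using hω.isUnit
  have : Leval (ω : ℂ) = (AWCevalHom ω).toRingHom := funext fun p => Leval_eq_evalHom ω p
  unfold MatEval
  rw [this, Matrix.map_mul]

end Aux

section Gates

lemma rotation_unitary {n : ℕ} {G : Matrix (Fin n) (Fin n) (LaurentPolynomial ℂ)}
    (h : IsRotationGate G) (ω₁ ω₂ : ℂ) :
    (MatEval ω₁ G)ᴴ * MatEval ω₂ G = 1 := by
  obtain ⟨a, b, R, hab, hR, haa, hab', hba, hbb, hdiag, hoff⟩ := h
  set E : Fin n → Fin n → ℝ := fun i j =>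
    if i = a then (if j = a then R 0 0 else if j = b then R 0 1 else 0)
    else if i = b then (if j = a then R 1 0 else if j = b then R 1 1 else 0)
    else (if j = i then 1 else 0) with hE
  have Eaa : E a a = R 0 0 := by simp [hE]
  have Eab : E a b = R 0 1 := by simp [hE, Ne.symm hab]
  have Eba : E b a = R 1 0 := by simp [hE, Ne.symm hab]
  have Ebb : E b b = R 1 1 := by simp [hE, Ne.symm hab]
  have Ea0 : ∀ j, j ≠ a → j ≠ b → E a j = 0 := by
    intro j hja hjb; simp [hE, hja, hjb]
  have Eb0 : ∀ j, j ≠ a → j ≠ b → E b j = 0 := by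
    intro j hja hjb; simp [hE, Ne.symm hab, hja, hjb]
  have Eoo : ∀ i, i ≠ a → i ≠ b → E i i = 1 := by
    intro i hia hib; simp [hE, hia, hib]
  have Eo0 : ∀ i j, i ≠ a → i ≠ b → j ≠ i → E i j = 0 := by
    intro i j hia hib hji; simp [hE, hia, hib, hji]
  have hG : ∀ (ω : ℂ) (i j : Fin n), Leval ω (G i j) = (E i j : ℂ) := by
    intro ω i j
    by_cases hia : i = a
    · by_cases hja : j = a
      · rw [hia, hja, haa, Leval_C, Eaa]
      · by_cases hjb : j = b
        · rw [hia, hjb, hab', Leval_C, Eab]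
        · rw [hia, hoff a j (fun h => hja h.symm) (fun h => hjb h.2) (fun h => hab h.1),
            Leval_zero, Ea0 j hja hjb, Complex.ofReal_zero]
    · by_cases hib : i = b
      · by_cases hja : j = a
        · rw [hib, hja, hba, Leval_C, Eba]
        · by_cases hjb : j = b
          · rw [hib, hjb, hbb, Leval_C, Ebb]
          · rw [hib, hoff b j (fun h => hjb h.symm) (fun h => hab h.1.symm) (fun h => hja h.2),
              Leval_zero, Eb0 j hja hjb, Complex.ofReal_zero]
      · by_cases hji : j = i
        · rw [hji, hdiag i hia hib, Leval_one, Eoo i hia hib, Complex.ofReal_one]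
        · rw [hoff i j (fun h => hji h.symm) (fun h => hia h.1) (fun h => hib h.1),
            Leval_zero, Eo0 i j hia hib hji, Complex.ofReal_zero]
  have hRo : ∀ p q : Fin 2, R 0 p * R 0 q + R 1 p * R 1 q = if p = q then 1 else 0 := by
    intro p q
    have := congrFun (congrFun hR p) q
    simpa [Matrix.mul_apply, Matrix.transpose_apply, Fin.sum_univ_two, Matrix.one_apply]
      using this
  have keyR : ∀ i j : Fin n, (∑ l, E l i * E l j) = if i = j then 1 else 0 := by
    intro i j
    by_cases hi : i = a ∨ i = b
    · have hv : ∀ l ∈ (Finset.univ : Finset (Fin n)), l ∉ ({a, b} : Finset (Fin n)) →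
          E l i * E l j = 0 := by
        intro l _ hl
        simp only [Finset.mem_insert, Finset.mem_singleton, not_or] at hl
        have hil : i ≠ l := by
          rintro rfl; rcases hi with h | h; exacts [hl.1 h, hl.2 h]
        rw [Eo0 l i hl.1 hl.2 hil, zero_mul]
      rw [← Finset.sum_subset (Finset.subset_univ ({a, b} : Finset (Fin n))) hv,
        Finset.sum_pair hab]
      rcases hi with hi | hi
      · rw [hi, Eaa, Eba]
        by_cases hja : j = a
        · rw [hja, Eaa, Eba, if_pos rfl]
          simpa using hRo 0 0
        · by_cases hjb : j = b
          · rw [hjb, Eab, Ebb, if_neg hab]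
            simpa using hRo 0 1
          · rw [Ea0 j hja hjb, Eb0 j hja hjb, if_neg (fun h => hja h.symm)]; ring
      · rw [hi, Eab, Ebb]
        by_cases hja : j = a
        · rw [hja, Eaa, Eba, if_neg (Ne.symm hab)]
          simpa using hRo 1 0
        · by_cases hjb : j = b
          · rw [hjb, Eab, Ebb, if_pos rfl]
            simpa using hRo 1 1
          · rw [Ea0 j hja hjb, Eb0 j hja hjb, if_neg (fun h => hjb h.symm)]; ring
    · push_neg at hi
      rw [Finset.sum_eq_single i]
      · rw [Eoo i hi.1 hi.2, one_mul]
        by_cases hji : j = i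
        · rw [hji, Eoo i hi.1 hi.2, if_pos rfl]
        · rw [Eo0 i j hi.1 hi.2 hji, if_neg (fun h => hji h.symm)]
      · intro l _ hl
        by_cases hla : l = a
        · rw [hla, Ea0 i hi.1 hi.2, zero_mul]
        · by_cases hlb : l = b
          · rw [hlb, Eb0 i hi.1 hi.2, zero_mul]
          · rw [Eo0 l i hla hlb (fun h => hl h.symm), zero_mul]
      · intro h; exact absurd (Finset.mem_univ i) h
  ext i j
  simp only [Matrix.mul_apply, Matrix.conjTranspose_apply, MatEval, Matrix.map_apply,
    Matrix.one_apply]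
  calc ∑ l, star (Leval ω₁ (G l i)) * Leval ω₂ (G l j)
      = ∑ l, ((E l i * E l j : ℝ) : ℂ) := by
        refine Finset.sum_congr rfl fun l _ => ?_
        rw [hG, hG, RCLike.star_def, Complex.conj_ofReal, ← Complex.ofReal_mul]
    _ = ((∑ l, E l i * E l j : ℝ) : ℂ) := by push_cast; ring
    _ = _ := by rw [keyR]; split_ifs <;> simp

lemma monomial_unitary {n : ℕ} {G : Matrix (Fin n) (Fin n) (LaurentPolynomial ℂ)}
    (h : IsMonomialGate G) {ω : ℂ} (hω : ω ≠ 0) :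
    (MatEval ((starRingEnd ℂ) ω)⁻¹ G)ᴴ * MatEval ω G = 1 := by
  obtain ⟨a, k, haa, hdiag, hoff⟩ := h
  ext i j
  rw [Matrix.mul_apply, Matrix.one_apply]
  by_cases hij : i = j
  · rw [if_pos hij, hij]
    rw [Finset.sum_eq_single j]
    · simp only [Matrix.conjTranspose_apply, MatEval, Matrix.map_apply]
      by_cases hja : j = a
      · rw [hja, show Leval (((starRingEnd ℂ) ω)⁻¹) (G a a) = ((starRingEnd ℂ) ω)⁻¹ ^ k from
          by rw [haa, Leval_T], show Leval ω (G a a) = ω ^ k from by rw [haa, Leval_T]]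
        rw [RCLike.star_def, map_zpow₀, map_inv₀, Complex.conj_conj, ← mul_zpow,
          inv_mul_cancel₀ hω, _root_.one_zpow]
      · rw [hdiag j hja, Leval_one, Leval_one, star_one, one_mul]
    · intro l _ hl
      simp only [Matrix.conjTranspose_apply, MatEval, Matrix.map_apply]
      rw [hoff l j hl, Leval_zero, star_zero, zero_mul]
    · intro h; exact absurd (Finset.mem_univ j) h
  · rw [if_neg hij, Finset.sum_eq_zero]
    intro l _
    simp only [Matrix.conjTranspose_apply, MatEval, Matrix.map_apply]
    by_cases hli : l = i
    · rw [show G l j = 0 from hoff l j (fun h => hij ((hli.symm.trans h))), Leval_zero, mul_zero]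
    · rw [hoff l i hli, Leval_zero, star_zero, zero_mul]

lemma lift_unitary {n m : ℕ} {M : ℕ → Matrix (Fin n) (Fin n) (LaurentPolynomial ℂ)}
    (hlift : IsLaurentLift m M) :
    ∀ t ≤ m, ∀ ω : ℂ, ω ≠ 0 →
      (MatEval ((starRingEnd ℂ) ω)⁻¹ (M t))ᴴ * MatEval ω (M t) = 1 := by
  intro t
  induction t with
  | zero =>
    intro _ ω hω
    rw [hlift.1, MatEval_one, MatEval_one]
    simp
  | succ t ih =>
    intro ht ω hω
    obtain ⟨G, hGgate, hstep⟩ := hlift.2 t (by omega)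
    have hω' : ((starRingEnd ℂ) ω)⁻¹ ≠ 0 := inv_ne_zero (by simpa using hω)
    rw [hstep, MatEval_mul hω', MatEval_mul hω, Matrix.conjTranspose_mul]
    have hGu : (MatEval ((starRingEnd ℂ) ω)⁻¹ G)ᴴ * MatEval ω G = 1 := by
      rcases hGgate with h | h
      · exact rotation_unitary h _ _
      · exact monomial_unitary h hω
    rw [Matrix.mul_assoc, ← Matrix.mul_assoc ((MatEval ((starRingEnd ℂ) ω)⁻¹ G)ᴴ), hGu,
      Matrix.one_mul]
    exact ih (by omega) ω hω

end Gates

section Analytic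

set_option maxHeartbeats 1000000
set_option synthInstance.maxHeartbeats 400000

lemma support_subset_matSupport {n : ℕ} (M : Matrix (Fin n) (Fin n) (LaurentPolynomial ℂ))
    (i j : Fin n) : (M i j).coeff.support ⊆ matSupport M :=
  fun k hk => Finset.mem_biUnion.2 ⟨(i, j), Finset.mem_univ _, hk⟩

lemma matVal_le {n : ℕ} {M : Matrix (Fin n) (Fin n) (LaurentPolynomial ℂ)} {k : ℤ}
    (hk : k ∈ matSupport M) : matVal M ≤ k := by
  have h := Finset.min_le hk
  obtain ⟨v, hv⟩ := Finset.min_of_mem hk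
  unfold matVal
  rw [hv] at h ⊢
  rw [WithTop.untopD_coe]
  exact_mod_cast h

lemma le_matDeg {n : ℕ} {M : Matrix (Fin n) (Fin n) (LaurentPolynomial ℂ)} {k : ℤ}
    (hk : k ∈ matSupport M) : k ≤ matDeg M := by
  have h := Finset.le_max hk
  obtain ⟨d, hd⟩ := Finset.max_of_mem hk
  unfold matDeg
  rw [hd] at h ⊢
  rw [WithBot.unbotD_coe]
  exact_mod_cast h

/-- coefficient matrix -/
def coeffMat {n : ℕ} (M : Matrix (Fin n) (Fin n) (LaurentPolynomial ℂ)) (k : ℤ) :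
    Matrix (Fin n) (Fin n) ℂ := Matrix.of fun i j => (M i j).coeff k

lemma MatEval_val_decomp {n : ℕ} (M : Matrix (Fin n) (Fin n) (LaurentPolynomial ℂ))
    {z : ℂ} (hz : z ≠ 0) :
    MatEval z M = z ^ matVal M •
      ∑ k ∈ matSupport M, z ^ ((k - matVal M).toNat) • coeffMat M k := by
  ext i j
  simp only [MatEval, Matrix.map_apply, Matrix.smul_apply, Matrix.sum_apply, smul_eq_mul]
  rw [Finset.mul_sum]
  rw [Leval_def, Finsupp.sum, Finset.sum_subset (support_subset_matSupport M i j)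
    (fun k _ hk => by rw [Finsupp.notMem_support_iff.1 hk, zero_mul])]
  refine Finset.sum_congr rfl fun k hk => ?_
  have hvk := matVal_le hk
  have hex : matVal M + ((k - matVal M).toNat : ℤ) = k := by
    rw [Int.toNat_of_nonneg (sub_nonneg.2 hvk)]; ring
  rw [coeffMat, Matrix.of_apply, ← zpow_natCast z ((k - matVal M).toNat), ← mul_assoc,
    ← zpow_add₀ hz, hex]
  ring

lemma MatEval_deg_decomp {n : ℕ} (M : Matrix (Fin n) (Fin n) (LaurentPolynomial ℂ))
    {z : ℂ} (hz : z ≠ 0) :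
    MatEval z⁻¹ M = z ^ (-matDeg M) •
      ∑ k ∈ matSupport M, z ^ ((matDeg M - k).toNat) • coeffMat M k := by
  ext i j
  simp only [MatEval, Matrix.map_apply, Matrix.smul_apply, Matrix.sum_apply, smul_eq_mul]
  rw [Finset.mul_sum]
  rw [Leval_def, Finsupp.sum, Finset.sum_subset (support_subset_matSupport M i j)
    (fun k _ hk => by rw [Finsupp.notMem_support_iff.1 hk, zero_mul])]
  refine Finset.sum_congr rfl fun k hk => ?_
  have hdk := le_matDeg hk
  have hex : -matDeg M + ((matDeg M - k).toNat : ℤ) = -k := by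
    rw [Int.toNat_of_nonneg (sub_nonneg.2 hdk)]; ring
  rw [coeffMat, Matrix.of_apply, _root_.inv_zpow, ← _root_.zpow_neg, ← zpow_natCast z ((matDeg M - k).toNat),
    ← mul_assoc, ← zpow_add₀ hz, hex]
  ring

lemma maxmod {X : Type*} [NormedAddCommGroup X] [NormedSpace ℂ X]
    {F : ℂ → X} (hd : Differentiable ℂ F) (hb : ∀ ζ : ℂ, ‖ζ‖ = 1 → ‖F ζ‖ ≤ 1)
    {z : ℂ} (hz : ‖z‖ ≤ 1) : ‖F z‖ ≤ 1 := by
  refine Complex.norm_le_of_forall_mem_frontier_norm_le (U := Metric.ball (0 : ℂ) 1)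
    Metric.isBounded_ball hd.diffContOnCl ?_ ?_
  · intro ζ hζ
    rw [frontier_ball (0 : ℂ) one_ne_zero, Metric.mem_sphere, dist_zero_right] at hζ
    exact hb ζ hζ
  · rw [closure_ball (0 : ℂ) one_ne_zero, Metric.mem_closedBall, dist_zero_right]
    exact hz

lemma boundary_norm_le {n : ℕ} {M : Matrix (Fin n) (Fin n) (LaurentPolynomial ℂ)}
    (hU : ∀ ω : ℂ, ω ≠ 0 → (MatEval ((starRingEnd ℂ) ω)⁻¹ M)ᴴ * MatEval ω M = 1)
    {ζ : ℂ} (hζ : ‖ζ‖ = 1) : ‖Matrix.toEuclideanCLM (𝕜 := ℂ) (MatEval ζ M)‖ ≤ 1 := by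
  have hζ0 : ζ ≠ 0 := by intro h; rw [h] at hζ; simp at hζ
  have hmul : (starRingEnd ℂ) ζ * ζ = 1 := by
    rw [mul_comm, Complex.mul_conj]
    norm_cast
    rw [Complex.normSq_eq_norm_sq, hζ, one_pow]
  have hconj : ((starRingEnd ℂ) ζ)⁻¹ = ζ := inv_eq_of_mul_eq_one_right hmul
  have h1 := hU ζ hζ0
  rw [hconj] at h1
  set u := Matrix.toEuclideanCLM (𝕜 := ℂ) (MatEval ζ M) with hu
  have h2 : star u * u = 1 := by
    have := congrArg (Matrix.toEuclideanCLM (𝕜 := ℂ)) h1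
    rwa [_root_.map_mul, _root_.map_one, ← Matrix.star_eq_conjTranspose, map_star] at this
  have h3 : ‖u‖ * ‖u‖ = ‖star u * u‖ := (CStarRing.norm_star_mul_self).symm
  rw [h2] at h3
  have h4 : ‖(1 : EuclideanSpace ℂ (Fin n) →L[ℂ] EuclideanSpace ℂ (Fin n))‖ ≤ 1 := by
    rw [ContinuousLinearMap.one_def]; exact ContinuousLinearMap.norm_id_le
  nlinarith [norm_nonneg u]

lemma specNorm_bounds {n : ℕ} {M : Matrix (Fin n) (Fin n) (LaurentPolynomial ℂ)}
    (hU : ∀ ω : ℂ, ω ≠ 0 → (MatEval ((starRingEnd ℂ) ω)⁻¹ M)ᴴ * MatEval ω M = 1)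
    {Δ : ℝ} (h0 : 0 < Δ) (h1 : Δ < 1) :
    specNorm (MatEval (Δ : ℂ) M) ≤ Δ ^ matVal M ∧
    specNorm (MatEval ((Δ : ℂ))⁻¹ M) ≤ Δ ^ (-matDeg M) := by
  have hΔ0 : (Δ : ℂ) ≠ 0 := Complex.ofReal_ne_zero.2 h0.ne'
  have hΔn : ‖(Δ : ℂ)‖ = Δ := by rw [Complex.norm_real, Real.norm_eq_abs, abs_of_pos h0]
  set F : ℂ → (EuclideanSpace ℂ (Fin n) →L[ℂ] EuclideanSpace ℂ (Fin n)) := fun z =>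
    ∑ k ∈ matSupport M, z ^ ((k - matVal M).toNat) •
      Matrix.toEuclideanCLM (𝕜 := ℂ) (coeffMat M k) with hFdef
  set Gf : ℂ → (EuclideanSpace ℂ (Fin n) →L[ℂ] EuclideanSpace ℂ (Fin n)) := fun z =>
    ∑ k ∈ matSupport M, z ^ ((matDeg M - k).toNat) •
      Matrix.toEuclideanCLM (𝕜 := ℂ) (coeffMat M k) with hGdef
  have hF : ∀ z : ℂ, z ≠ 0 →
      Matrix.toEuclideanCLM (𝕜 := ℂ) (MatEval z M) = z ^ matVal M • F z := by
    intro z hz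
    rw [MatEval_val_decomp M hz, _root_.map_smul, map_sum]
    simp only [_root_.map_smul, hFdef]
  have hG : ∀ z : ℂ, z ≠ 0 →
      Matrix.toEuclideanCLM (𝕜 := ℂ) (MatEval z⁻¹ M) = z ^ (-matDeg M) • Gf z := by
    intro z hz
    rw [MatEval_deg_decomp M hz, _root_.map_smul, map_sum]
    simp only [_root_.map_smul, hGdef]
  have hFd : Differentiable ℂ F :=
    Differentiable.fun_sum fun k _ => (differentiable_pow _).fun_smul (differentiable_const _)
  have hGd : Differentiable ℂ Gf :=
    Differentiable.fun_sum fun k _ => (differentiable_pow _).fun_smul (differentiable_const _)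
  have hFb : ∀ ζ : ℂ, ‖ζ‖ = 1 → ‖F ζ‖ ≤ 1 := by
    intro ζ hζ
    have hζ0 : ζ ≠ 0 := by intro h; rw [h] at hζ; simp at hζ
    have : ‖F ζ‖ = ‖Matrix.toEuclideanCLM (𝕜 := ℂ) (MatEval ζ M)‖ := by
      rw [hF ζ hζ0, norm_smul (ζ ^ matVal M) (F ζ), norm_zpow, hζ, _root_.one_zpow, one_mul]
    rw [this]
    exact boundary_norm_le hU hζ
  have hGb : ∀ ζ : ℂ, ‖ζ‖ = 1 → ‖Gf ζ‖ ≤ 1 := by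
    intro ζ hζ
    have hζ0 : ζ ≠ 0 := by intro h; rw [h] at hζ; simp at hζ
    have : ‖Gf ζ‖ = ‖Matrix.toEuclideanCLM (𝕜 := ℂ) (MatEval ζ⁻¹ M)‖ := by
      rw [hG ζ hζ0, norm_smul (ζ ^ (-matDeg M)) (Gf ζ), norm_zpow, hζ, _root_.one_zpow, one_mul]
    rw [this]
    exact boundary_norm_le hU (by rw [norm_inv, hζ, inv_one])
  have hΔle : ‖(Δ : ℂ)‖ ≤ 1 := by rw [hΔn]; exact h1.le
  constructor
  · have : specNorm (MatEval (Δ : ℂ) M) = ‖((Δ : ℂ) ^ matVal M) • F (Δ : ℂ)‖ := by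
      unfold specNorm; rw [hF (Δ : ℂ) hΔ0]
    rw [this, norm_smul ((Δ:ℂ) ^ matVal M) (F (Δ:ℂ)), norm_zpow, hΔn]
    calc Δ ^ matVal M * ‖F (Δ : ℂ)‖ ≤ Δ ^ matVal M * 1 :=
          mul_le_mul_of_nonneg_left (maxmod hFd hFb hΔle) (zpow_nonneg h0.le _)
      _ = Δ ^ matVal M := mul_one _
  · have : specNorm (MatEval ((Δ : ℂ))⁻¹ M) = ‖((Δ : ℂ) ^ (-matDeg M)) • Gf (Δ : ℂ)‖ := by
      unfold specNorm; rw [hG (Δ : ℂ) hΔ0]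
    rw [this, norm_smul ((Δ:ℂ) ^ (-matDeg M)) (Gf (Δ:ℂ)), norm_zpow, hΔn]
    calc Δ ^ (-matDeg M) * ‖Gf (Δ : ℂ)‖ ≤ Δ ^ (-matDeg M) * 1 :=
          mul_le_mul_of_nonneg_left (maxmod hGd hGb hΔle) (zpow_nonneg h0.le _)
      _ = Δ ^ (-matDeg M) := mul_one _

end Analytic

section ConjT
open scoped Matrix.Norms.L2Operator

lemma specNorm_conjTranspose {n : ℕ} (A : Matrix (Fin n) (Fin n) ℂ) :
    specNorm Aᴴ = specNorm A := by
  rw [specNorm, specNorm, ← Matrix.cstar_norm_def, ← Matrix.cstar_norm_def]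
  exact Matrix.l2_opNorm_conjTranspose A

end ConjT
set_option maxHeartbeats 1000000
set_option synthInstance.maxHeartbeats 400000

/-- algebraically well conditioned implies geometrically well conditioned. -/
theorem algWellConditioned_implies_geomWellConditioned {n m : ℕ}
    (M : ℕ → Matrix (Fin n) (Fin n) (LaurentPolynomial ℂ)) (Δ κ : ℝ)
    (h0 : 0 < Δ) (h1 : Δ < 1) (hκ : 1 ≤ κ)
    (hlift : IsLaurentLift m M) (hcond : IsAlgWellConditioned m M Δ κ) :
    ∀ t ≤ m, IsUnit (MatEval (Δ : ℂ) (M t)) ∧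
      specNorm (MatEval (Δ : ℂ) (M t)) * specNorm (MatEval (Δ : ℂ) (M t))⁻¹ ≤ κ := by
  intro t ht
  have hU : ∀ ω : ℂ, ω ≠ 0 →
      (MatEval ((starRingEnd ℂ) ω)⁻¹ (M t))ᴴ * MatEval ω (M t) = 1 :=
    fun ω hω => lift_unitary hlift t ht ω hω
  have hΔC : ((Δ : ℝ) : ℂ) ≠ 0 := Complex.ofReal_ne_zero.2 h0.ne'
  have hL : (MatEval ((Δ : ℂ))⁻¹ (M t))ᴴ * MatEval (Δ : ℂ) (M t) = 1 := by
    have := hU (Δ : ℂ) hΔC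
    rwa [Complex.conj_ofReal] at this
  refine ⟨(Matrix.isUnit_iff_isUnit_det _).2 (Matrix.isUnit_det_of_left_inverse hL), ?_⟩
  have hinv : (MatEval (Δ : ℂ) (M t))⁻¹ = (MatEval ((Δ : ℂ))⁻¹ (M t))ᴴ :=
    Matrix.inv_eq_left_inv hL
  obtain ⟨hb1, hb2⟩ := specNorm_bounds hU h0 h1
  have hb2' : specNorm ((MatEval (Δ : ℂ) (M t))⁻¹) ≤ Δ ^ (-matDeg (M t)) := by
    rw [hinv]
    rw [specNorm_conjTranspose]
    exact hb2
  have hnn : (0 : ℝ) ≤ specNorm ((MatEval (Δ : ℂ) (M t))⁻¹) := by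
    unfold specNorm; exact norm_nonneg _
  calc specNorm (MatEval (Δ : ℂ) (M t)) * specNorm ((MatEval (Δ : ℂ) (M t))⁻¹)
      ≤ Δ ^ matVal (M t) * Δ ^ (-matDeg (M t)) :=
        mul_le_mul hb1 hb2' hnn (zpow_nonneg h0.le _)
    _ = Δ ^ (matVal (M t) - matDeg (M t)) := by
        rw [← zpow_add₀ h0.ne', ← sub_eq_add_neg]
    _ ≤ κ := hcond t ht
end
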